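/- arXiv:1509.02230 — 3 statements merged into one kernel-verified Lean document; each statement's English description precedes it below -/
import Mathlib

section
/- Let X, Y, Z be independent real random variables, with X and Y identically distributed with mean μ and variance σ², and Z having finite second moment. Let X' = ZX + (1−Z)Y. Then Var(X') − σ² = 2 E[Z(Z−1)] σ². -/
open MeasureTheory ProbabilityTheory Filter

private lemma iIndepFun_ae_eq' {Ω ι : Type*} [MeasurableSpace Ω] {μ : Measure Ω} {β : ι → Type*}
    [m : ∀ i, MeasurableSpace (β i)] {f g : ∀ i, Ω → β i}
    (hf : iIndepFun f μ) (h : ∀ i, f i =ᵐ[μ] g i) : iIndepFun g μ := by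
  rw [iIndepFun_iff_measure_inter_preimage_eq_mul] at hf ⊢
  intro S sets hsets
  have h1 : ∀ i : ι, μ (f i ⁻¹' sets i) = μ (g i ⁻¹' sets i) := by
    intro i
    refine measure_congr (eventuallyEq_set.2 ?_)
    filter_upwards [h i] with ω hω
    simp [Set.mem_preimage, hω]
  have h2 : μ (⋂ i ∈ S, f i ⁻¹' sets i) = μ (⋂ i ∈ S, g i ⁻¹' sets i) := by
    refine measure_congr (eventuallyEq_set.2 ?_)
    have hall : ∀ᵐ ω ∂μ, ∀ i ∈ (S : Set ι), f i ω = g i ω :=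
      (MeasureTheory.ae_ball_iff S.countable_toSet).2 fun i _ => h i
    filter_upwards [hall] with ω hω
    simp only [Set.mem_iInter, Set.mem_preimage]
    exact forall₂_congr fun i hi => by rw [hω i hi]
  rw [← h2, hf S hsets]
  exact Finset.prod_congr rfl fun i _ => h1 i

private lemma variance_ae_eq' {Ω : Type*} [MeasurableSpace Ω] {μ : Measure Ω} {f g : Ω → ℝ}
    (h : f =ᵐ[μ] g) : variance f μ = variance g μ := by
  have hint : μ[f] = μ[g] := integral_congr_ae h
  unfold ProbabilityTheory.variance ProbabilityTheory.evariance
  rw [hint]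
  refine congrArg ENNReal.toReal (lintegral_congr_ae ?_)
  filter_upwards [h] with ω hω
  rw [hω]

private lemma stretch_aux {Ω : Type*} [MeasurableSpace Ω] (μ : Measure Ω)
    [IsProbabilityMeasure μ] (X Y Z : Ω → ℝ) (m σ2 : ℝ)
    (mX : Measurable X) (mY : Measurable Y) (mZ : Measurable Z)
    (hindep : iIndepFun ![X, Y, Z] μ)
    (hX2 : MemLp X 2 μ) (hY2 : MemLp Y 2 μ) (hZ2 : MemLp Z 2 μ)
    (hXm : ∫ ω, X ω ∂μ = m) (hYm : ∫ ω, Y ω ∂μ = m)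
    (hXv : variance X μ = σ2) (hYv : variance Y μ = σ2) :
    variance (fun ω => Z ω * X ω + (1 - Z ω) * Y ω) μ - σ2
      = 2 * (∫ ω, Z ω * (Z ω - 1) ∂μ) * σ2 := by
  have msq : Measurable fun x : ℝ => x ^ 2 := measurable_id.pow_const 2
  have hmeas : ∀ i, Measurable (![X, Y, Z] i) := by
    intro i; fin_cases i
    · exact mX
    · exact mY
    · exact mZ
  -- pairwise independence
  have iXY : IndepFun X Y μ := by
    simpa using hindep.indepFun (show (0 : Fin 3) ≠ 1 by decide)
  have iXZ : IndepFun X Z μ := by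
    simpa using hindep.indepFun (show (0 : Fin 3) ≠ 2 by decide)
  have iYZ : IndepFun Y Z μ := by
    simpa using hindep.indepFun (show (1 : Fin 3) ≠ 2 by decide)
  have iXY_Z : IndepFun (fun ω => (X ω, Y ω)) Z μ := by
    simpa using hindep.indepFun_prodMk hmeas 0 1 2 (by decide) (by decide)
  -- integrability
  have intX : Integrable X μ := hX2.integrable one_le_two
  have intY : Integrable Y μ := hY2.integrable one_le_two
  have intZ : Integrable Z μ := hZ2.integrable one_le_two
  have intX2 : Integrable (fun ω => X ω ^ 2) μ :=
    (memLp_two_iff_integrable_sq hX2.aestronglyMeasurable).1 hX2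
  have intY2 : Integrable (fun ω => Y ω ^ 2) μ :=
    (memLp_two_iff_integrable_sq hY2.aestronglyMeasurable).1 hY2
  have intZ2 : Integrable (fun ω => Z ω ^ 2) μ :=
    (memLp_two_iff_integrable_sq hZ2.aestronglyMeasurable).1 hZ2
  set a := ∫ ω, Z ω ∂μ with ha
  set b := ∫ ω, Z ω ^ 2 ∂μ with hb
  -- second moments of X and Y
  have EX2 : ∫ ω, X ω ^ 2 ∂μ = σ2 + m ^ 2 := by
    have h := variance_eq_sub hX2
    simp only [Pi.pow_apply] at h
    rw [hXv, hXm] at h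
    linarith
  have EY2 : ∫ ω, Y ω ^ 2 ∂μ = σ2 + m ^ 2 := by
    have h := variance_eq_sub hY2
    simp only [Pi.pow_apply] at h
    rw [hYv, hYm] at h
    linarith
  -- derived independences
  have iZ2X2 : IndepFun (fun ω => Z ω ^ 2) (fun ω => X ω ^ 2) μ := iXZ.symm.comp msq msq
  have iZ2Y2 : IndepFun (fun ω => Z ω ^ 2) (fun ω => Y ω ^ 2) μ := iYZ.symm.comp msq msq
  have iZY2 : IndepFun Z (fun ω => Y ω ^ 2) μ := iYZ.symm.comp measurable_id msq
  have iXYc : IndepFun (fun ω => X ω * Y ω) (fun ω => Z ω - Z ω ^ 2) μ :=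
    iXY_Z.comp (measurable_fst.mul measurable_snd)
      (measurable_id.sub (measurable_id.pow_const 2))
  -- integrability of products
  have intXY : Integrable (fun ω => X ω * Y ω) μ := iXY.integrable_mul intX intY
  have intZX : Integrable (fun ω => Z ω * X ω) μ := iXZ.symm.integrable_mul intZ intX
  have intZY : Integrable (fun ω => Z ω * Y ω) μ := iYZ.symm.integrable_mul intZ intY
  have intZ2X2 : Integrable (fun ω => Z ω ^ 2 * X ω ^ 2) μ := iZ2X2.integrable_mul intZ2 intX2
  have intZ2Y2 : Integrable (fun ω => Z ω ^ 2 * Y ω ^ 2) μ := iZ2Y2.integrable_mul intZ2 intY2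
  have intZY2 : Integrable (fun ω => Z ω * Y ω ^ 2) μ := iZY2.integrable_mul intZ intY2
  have intCross : Integrable (fun ω => X ω * Y ω * (Z ω - Z ω ^ 2)) μ :=
    iXYc.integrable_mul intXY (intZ.sub intZ2)
  -- products integrals
  have EXY : ∫ ω, X ω * Y ω ∂μ = m * m := by
    rw [iXY.integral_fun_mul_eq_mul_integral mX.aestronglyMeasurable mY.aestronglyMeasurable, hXm, hYm]
  have EZX : ∫ ω, Z ω * X ω ∂μ = a * m := by
    rw [iXZ.symm.integral_fun_mul_eq_mul_integral mZ.aestronglyMeasurable mX.aestronglyMeasurable, hXm]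
  have EZY : ∫ ω, Z ω * Y ω ∂μ = a * m := by
    rw [iYZ.symm.integral_fun_mul_eq_mul_integral mZ.aestronglyMeasurable mY.aestronglyMeasurable, hYm]
  have EZ2X2 : ∫ ω, Z ω ^ 2 * X ω ^ 2 ∂μ = b * (σ2 + m ^ 2) := by
    rw [iZ2X2.integral_fun_mul_eq_mul_integral (mZ.pow_const 2).aestronglyMeasurable
      (mX.pow_const 2).aestronglyMeasurable, EX2]
  have EZ2Y2 : ∫ ω, Z ω ^ 2 * Y ω ^ 2 ∂μ = b * (σ2 + m ^ 2) := by
    rw [iZ2Y2.integral_fun_mul_eq_mul_integral (mZ.pow_const 2).aestronglyMeasurable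
      (mY.pow_const 2).aestronglyMeasurable, EY2]
  have EZY2 : ∫ ω, Z ω * Y ω ^ 2 ∂μ = a * (σ2 + m ^ 2) := by
    rw [iZY2.integral_fun_mul_eq_mul_integral mZ.aestronglyMeasurable (mY.pow_const 2).aestronglyMeasurable, EY2]
  have ECross : ∫ ω, X ω * Y ω * (Z ω - Z ω ^ 2) ∂μ = m * m * (a - b) := by
    rw [iXYc.integral_fun_mul_eq_mul_integral (mX.mul mY).aestronglyMeasurable
      (mZ.sub (mZ.pow_const 2)).aestronglyMeasurable, EXY, integral_sub intZ intZ2]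
  -- the proposal W
  set W : Ω → ℝ := fun ω => Z ω * X ω + (1 - Z ω) * Y ω with hW
  have hW2int : Integrable (fun ω => W ω ^ 2) μ := by
    have : Integrable (fun ω => Z ω ^ 2 * X ω ^ 2 + 2 * (X ω * Y ω * (Z ω - Z ω ^ 2))
        + (Y ω ^ 2 - 2 * (Z ω * Y ω ^ 2) + Z ω ^ 2 * Y ω ^ 2)) μ :=
      (intZ2X2.add (intCross.const_mul 2)).add ((intY2.sub (intZY2.const_mul 2)).add intZ2Y2)
    refine this.congr (Eventually.of_forall fun ω => ?_)
    simp only [hW]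
    ring
  have hWmem : MemLp W 2 μ := by
    refine (memLp_two_iff_integrable_sq ?_).2 hW2int
    exact ((mZ.mul mX).add ((measurable_const.sub mZ).mul mY)).aestronglyMeasurable
  have EW : ∫ ω, W ω ∂μ = m := by
    have : ∫ ω, W ω ∂μ = ∫ ω, (Z ω * X ω + (Y ω - Z ω * Y ω)) ∂μ := by
      refine integral_congr_ae (Eventually.of_forall fun ω => ?_)
      simp only [hW]; ring
    have intYmZY : Integrable (fun ω => Y ω - Z ω * Y ω) μ := intY.sub intZY
    rw [this, integral_add intZX intYmZY, integral_sub intY intZY, EZX, EZY, hYm]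
    ring
  have EW2 : ∫ ω, W ω ^ 2 ∂μ
      = b * (σ2 + m ^ 2) + 2 * (m * m * (a - b))
        + ((σ2 + m ^ 2) - 2 * (a * (σ2 + m ^ 2)) + b * (σ2 + m ^ 2)) := by
    have h1 : ∫ ω, W ω ^ 2 ∂μ = ∫ ω, (Z ω ^ 2 * X ω ^ 2 + 2 * (X ω * Y ω * (Z ω - Z ω ^ 2))
        + (Y ω ^ 2 - 2 * (Z ω * Y ω ^ 2) + Z ω ^ 2 * Y ω ^ 2)) ∂μ := by
      refine integral_congr_ae (Eventually.of_forall fun ω => ?_)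
      simp only [hW]; ring
    have intC2 : Integrable (fun ω => 2 * (X ω * Y ω * (Z ω - Z ω ^ 2))) μ :=
      intCross.const_mul 2
    have intZY2' : Integrable (fun ω => 2 * (Z ω * Y ω ^ 2)) μ := intZY2.const_mul 2
    have intA : Integrable (fun ω => Z ω ^ 2 * X ω ^ 2
        + 2 * (X ω * Y ω * (Z ω - Z ω ^ 2))) μ := intZ2X2.add intC2
    have intB1 : Integrable (fun ω => Y ω ^ 2 - 2 * (Z ω * Y ω ^ 2)) μ := intY2.sub intZY2'
    have intB : Integrable (fun ω => Y ω ^ 2 - 2 * (Z ω * Y ω ^ 2) + Z ω ^ 2 * Y ω ^ 2) μ :=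
      intB1.add intZ2Y2
    rw [h1, integral_add intA intB, integral_add intZ2X2 intC2, integral_add intB1 intZ2Y2,
      integral_sub intY2 intZY2', integral_const_mul 2, integral_const_mul 2,
      ECross, EZ2X2, EZ2Y2, EZY2, EY2]
  have hvar : variance W μ = ∫ ω, W ω ^ 2 ∂μ - (∫ ω, W ω ∂μ) ^ 2 := by
    have h := variance_eq_sub hWmem
    simpa only [Pi.pow_apply] using h
  have ERHS : ∫ ω, Z ω * (Z ω - 1) ∂μ = b - a := by
    have : ∫ ω, Z ω * (Z ω - 1) ∂μ = ∫ ω, (Z ω ^ 2 - Z ω) ∂μ := by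
      refine integral_congr_ae (Eventually.of_forall fun ω => ?_)
      ring
    rw [this, integral_sub intZ2 intZ]
  rw [hvar, EW2, EW, ERHS]
  ring

/-- If `X' = ZX + (1−Z)Y` with `X, Y, Z` independent, `X` and `Y` i.i.d. with mean `m` and
variance `σ²`, and `Z` with finite second moment, then `Var(X') − σ² = 2 E[Z(Z−1)] σ²`. -/
theorem stretch_proposal_variance {Ω : Type*} [MeasurableSpace Ω] (μ : Measure Ω)
    [IsProbabilityMeasure μ] (X Y Z : Ω → ℝ) (m σ2 : ℝ)
    (hindep : iIndepFun ![X, Y, Z] μ)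
    (hX2 : MemLp X 2 μ) (hY2 : MemLp Y 2 μ) (hZ2 : MemLp Z 2 μ)
    (hid : Measure.map X μ = Measure.map Y μ)
    (hXm : ∫ ω, X ω ∂μ = m) (hYm : ∫ ω, Y ω ∂μ = m)
    (hXv : variance X μ = σ2) (hYv : variance Y μ = σ2) :
    variance (fun ω => Z ω * X ω + (1 - Z ω) * Y ω) μ - σ2
      = 2 * (∫ ω, Z ω * (Z ω - 1) ∂μ) * σ2 := by
  have haX := hX2.aestronglyMeasurable
  have haY := hY2.aestronglyMeasurable
  have haZ := hZ2.aestronglyMeasurable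
  set X' := haX.mk X with hX'
  set Y' := haY.mk Y with hY'
  set Z' := haZ.mk Z with hZ'
  have heX : X =ᵐ[μ] X' := haX.ae_eq_mk
  have heY : Y =ᵐ[μ] Y' := haY.ae_eq_mk
  have heZ : Z =ᵐ[μ] Z' := haZ.ae_eq_mk
  have mX' : Measurable X' := haX.stronglyMeasurable_mk.measurable
  have mY' : Measurable Y' := haY.stronglyMeasurable_mk.measurable
  have mZ' : Measurable Z' := haZ.stronglyMeasurable_mk.measurable
  have hindep' : iIndepFun ![X', Y', Z'] μ := by
    refine iIndepFun_ae_eq' hindep ?_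
    intro i
    fin_cases i
    · exact heX
    · exact heY
    · exact heZ
  have key := stretch_aux μ X' Y' Z' m σ2 mX' mY' mZ' hindep'
    (hX2.ae_eq heX) (hY2.ae_eq heY) (hZ2.ae_eq heZ)
    (by rw [← integral_congr_ae heX]; exact hXm)
    (by rw [← integral_congr_ae heY]; exact hYm)
    (by rw [← variance_ae_eq' heX]; exact hXv)
    (by rw [← variance_ae_eq' heY]; exact hYv)
  have hWeq : (fun ω => Z ω * X ω + (1 - Z ω) * Y ω)
      =ᵐ[μ] fun ω => Z' ω * X' ω + (1 - Z' ω) * Y' ω := by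
    filter_upwards [heX, heY, heZ] with ω h1 h2 h3
    rw [h1, h2, h3]
  have hZeq : ∫ ω, Z ω * (Z ω - 1) ∂μ = ∫ ω, Z' ω * (Z' ω - 1) ∂μ := by
    refine integral_congr_ae ?_
    filter_upwards [heZ] with ω h1
    rw [h1]
  rw [variance_ae_eq' hWeq, hZeq]
  exact key
end

section
/- Let (X_i), (Y_i) be sequences of i.i.d. real random variables, mutually independent, with common mean μ and common variance σ² (finite second moments). Fix z > 0 and define h_n = (n−1) log z − (1/2)Σ_{i=1}^n (z X_i + (1−z) Y_i)² + (1/2)Σ_{i=1}^n X_i². Then h_n/n converges almost surely to f_σ(z) = log z − σ² z(z−1) (and the limit does not depend on μ). -/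
open MeasureTheory ProbabilityTheory Filter

lemma aies_iIndepFun_congr {Ω : Type*} [MeasurableSpace Ω] {μ : Measure Ω} {ι : Type*}
    {f g : ι → Ω → ℝ} (h : iIndepFun (m := fun _ => Real.measurableSpace) f μ)
    (hfg : ∀ i, f i =ᵐ[μ] g i) : iIndepFun (m := fun _ => Real.measurableSpace) g μ := by
  rw [iIndepFun_iff_measure_inter_preimage_eq_mul] at h ⊢
  intro S sets hmeas
  have hae : ∀ i : ι, (f i ⁻¹' sets i : Set Ω) =ᵐ[μ] (g i ⁻¹' sets i : Set Ω) := by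
    intro i
    filter_upwards [hfg i] with ω hω
    exact congrArg (fun x => x ∈ sets i) hω
  have h1 : μ (⋂ i ∈ S, g i ⁻¹' sets i) = μ (⋂ i ∈ S, f i ⁻¹' sets i) := by
    apply measure_congr
    rw [Filter.eventuallyEq_set]
    have : ∀ᵐ ω ∂μ, ∀ i ∈ S, (ω ∈ g i ⁻¹' sets i ↔ ω ∈ f i ⁻¹' sets i) := by
      rw [Filter.eventually_all_finset]
      intro i _
      filter_upwards [hae i] with ω hω
      rw [show (ω ∈ f i ⁻¹' sets i) = (ω ∈ g i ⁻¹' sets i) from hω]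
    filter_upwards [this] with ω hω
    simp only [Set.mem_iInter]
    exact ⟨fun h' i hi => (hω i hi).1 (h' i hi), fun h' i hi => (hω i hi).2 (h' i hi)⟩
  rw [h1, h S hmeas]
  exact Finset.prod_congr rfl fun i _ => measure_congr (hae i)

/-- Law of large numbers for the normalized log acceptance ratio of the AIES stretch move on an
`n`-dimensional standard Gaussian: if `(X_i)`, `(Y_i)` are mutually independent i.i.d. sequences
with mean `m` and variance `σ²`, then
`h_n/n → f_σ(z) = log z − σ² z(z−1)` almost surely. -/
theorem log_acceptance_ratio_lln {Ω : Type*} [MeasurableSpace Ω] (μ : Measure Ω)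
    [IsProbabilityMeasure μ] (X Y : ℕ → Ω → ℝ) (m σ : ℝ) (z : ℝ) (hz : 0 < z)
    (hindep : iIndepFun (m := fun _ => Real.measurableSpace)
      (fun p : Bool × ℕ => if p.1 then X p.2 else Y p.2) μ)
    (hXid : ∀ i, Measure.map (X i) μ = Measure.map (X 0) μ)
    (hYid : ∀ i, Measure.map (Y i) μ = Measure.map (Y 0) μ)
    (hX2 : ∀ i, MemLp (X i) 2 μ) (hY2 : ∀ i, MemLp (Y i) 2 μ)
    (hXm : ∀ i, ∫ ω, X i ω ∂μ = m) (hYm : ∀ i, ∫ ω, Y i ω ∂μ = m)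
    (hXv : ∀ i, variance (X i) μ = σ^2) (hYv : ∀ i, variance (Y i) μ = σ^2) :
    ∀ᵐ ω ∂μ, Tendsto
      (fun n : ℕ =>
        (((n : ℝ) - 1) * Real.log z
          - (1/2) * ∑ i ∈ Finset.range n, (z * X i ω + (1 - z) * Y i ω)^2
          + (1/2) * ∑ i ∈ Finset.range n, (X i ω)^2) / n)
      atTop (nhds (Real.log z - σ^2 * z * (z - 1))) := by
  -- measurable modifications
  set f : Bool × ℕ → Ω → ℝ := fun p => if p.1 then X p.2 else Y p.2 with hf
  have hfaesm : ∀ p : Bool × ℕ, AEStronglyMeasurable (f p) μ := by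
    rintro ⟨b, i⟩
    cases b
    · exact (hY2 i).aestronglyMeasurable
    · exact (hX2 i).aestronglyMeasurable
  set f' : Bool × ℕ → Ω → ℝ := fun p => (hfaesm p).mk (f p) with hf'
  have hf'meas : ∀ p, Measurable (f' p) := fun p =>
    (hfaesm p).stronglyMeasurable_mk.measurable
  have hf'eq : ∀ p, f p =ᵐ[μ] f' p := fun p => (hfaesm p).ae_eq_mk
  set X' : ℕ → Ω → ℝ := fun i => f' (true, i) with hX'
  set Y' : ℕ → Ω → ℝ := fun i => f' (false, i) with hY'
  have hXeq : ∀ i, X i =ᵐ[μ] X' i := fun i => hf'eq (true, i)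
  have hYeq : ∀ i, Y i =ᵐ[μ] Y' i := fun i => hf'eq (false, i)
  have hX'meas : ∀ i, Measurable (X' i) := fun i => hf'meas (true, i)
  have hY'meas : ∀ i, Measurable (Y' i) := fun i => hf'meas (false, i)
  have hindep' : iIndepFun (m := fun _ => Real.measurableSpace) f' μ :=
    aies_iIndepFun_congr hindep hf'eq
  -- ℒ² bounds for modifications
  have hX'2 : ∀ i, MemLp (X' i) 2 μ := fun i => (hX2 i).ae_eq (hXeq i)
  have hY'2 : ∀ i, MemLp (Y' i) 2 μ := fun i => (hY2 i).ae_eq (hYeq i)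
  -- law equality
  have hX'map : ∀ i, Measure.map (X' i) μ = Measure.map (X' 0) μ := by
    intro i
    rw [← Measure.map_congr (hXeq i), ← Measure.map_congr (hXeq 0), hXid i]
  have hY'map : ∀ i, Measure.map (Y' i) μ = Measure.map (Y' 0) μ := by
    intro i
    rw [← Measure.map_congr (hYeq i), ← Measure.map_congr (hYeq 0), hYid i]
  -- independence of X' i and Y' i
  have hXYindep : ∀ i, IndepFun (X' i) (Y' i) μ := fun i =>
    hindep'.indepFun (by simp : ((true, i) : Bool × ℕ) ≠ (false, i))
  -- pair identically distributed
  have hpair : ∀ i, IdentDistrib (fun ω => (X' i ω, Y' i ω)) (fun ω => (X' 0 ω, Y' 0 ω)) μ μ := by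
    intro i
    refine ⟨((hX'meas i).prodMk (hY'meas i)).aemeasurable,
      ((hX'meas 0).prodMk (hY'meas 0)).aemeasurable, ?_⟩
    rw [(indepFun_iff_map_prod_eq_prod_map_map (hX'meas i).aemeasurable
          (hY'meas i).aemeasurable).1 (hXYindep i),
        (indepFun_iff_map_prod_eq_prod_map_map (hX'meas 0).aemeasurable
          (hY'meas 0).aemeasurable).1 (hXYindep 0),
        hX'map i, hY'map i]
  -- the two sequences for the strong law
  set W : ℕ → Ω → ℝ := fun i ω => (z * X' i ω + (1 - z) * Y' i ω)^2 with hW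
  set V : ℕ → Ω → ℝ := fun i ω => (X' i ω)^2 with hV
  have hg : Measurable (fun p : ℝ × ℝ => (z * p.1 + (1 - z) * p.2)^2) := by measurability
  have hWindep : Pairwise (Function.onFun (IndepFun · · μ) W) := by
    intro i j hij
    have := hindep'.indepFun_prodMk_prodMk hf'meas (true, i) (false, i) (true, j) (false, j)
      (by simp [hij]) (by simp) (by simp) (by simp [hij])
    exact this.comp hg hg
  have hVindep : Pairwise (Function.onFun (IndepFun · · μ) V) := by
    intro i j hij
    have := hindep'.indepFun (show ((true, i) : Bool × ℕ) ≠ (true, j) by simp [hij])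
    exact this.comp (measurable_id.pow_const 2) (measurable_id.pow_const 2)
  have hWident : ∀ i, IdentDistrib (W i) (W 0) μ μ := fun i => (hpair i).comp hg
  have hVident : ∀ i, IdentDistrib (V i) (V 0) μ μ := by
    intro i
    have : IdentDistrib (X' i) (X' 0) μ μ :=
      ⟨(hX'meas i).aemeasurable, (hX'meas 0).aemeasurable, hX'map i⟩
    exact this.comp (measurable_id.pow_const 2)
  -- integrability
  have hcomb : MemLp (fun ω => z * X' 0 ω + (1 - z) * Y' 0 ω) 2 μ :=
    ((hX'2 0).const_mul z).add ((hY'2 0).const_mul (1 - z))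
  have hWint : Integrable (W 0) μ := hcomb.integrable_sq
  have hVint : Integrable (V 0) μ := (hX'2 0).integrable_sq
  -- expectations
  have hX'm : ∫ ω, X' 0 ω ∂μ = m := by
    rw [← integral_congr_ae (hXeq 0)]; exact hXm 0
  have hY'm : ∫ ω, Y' 0 ω ∂μ = m := by
    rw [← integral_congr_ae (hYeq 0)]; exact hYm 0
  have hEX2 : ∫ ω, (X' 0 ω)^2 ∂μ = σ^2 + m^2 := by
    have h1 : variance (X' 0) μ = σ^2 := by
      rw [← hXv 0]
      exact ((IdentDistrib.of_ae_eq (hX2 0).aestronglyMeasurable.aemeasurable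
        (hXeq 0)).variance_eq).symm
    have h2 := variance_eq_sub (hX'2 0)
    have : ∫ ω, (X' 0 ω)^2 ∂μ = variance (X' 0) μ + (∫ ω, X' 0 ω ∂μ)^2 := by
      rw [h2]; ring_nf; rfl
    rw [this, h1, hX'm]
  have hEY2 : ∫ ω, (Y' 0 ω)^2 ∂μ = σ^2 + m^2 := by
    have h1 : variance (Y' 0) μ = σ^2 := by
      rw [← hYv 0]
      exact ((IdentDistrib.of_ae_eq (hY2 0).aestronglyMeasurable.aemeasurable
        (hYeq 0)).variance_eq).symm
    have h2 := variance_eq_sub (hY'2 0)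
    have : ∫ ω, (Y' 0 ω)^2 ∂μ = variance (Y' 0) μ + (∫ ω, Y' 0 ω ∂μ)^2 := by
      rw [h2]; ring_nf; rfl
    rw [this, h1, hY'm]
  have hEXY : ∫ ω, X' 0 ω * Y' 0 ω ∂μ = m * m := by
    have h := (hXYindep 0).integral_fun_mul_eq_mul_integral (hX'meas 0).aestronglyMeasurable
      (hY'meas 0).aestronglyMeasurable
    rw [hX'm, hY'm] at h
    exact h
  have hX2int : Integrable (fun ω => (X' 0 ω)^2) μ := (hX'2 0).integrable_sq
  have hY2int : Integrable (fun ω => (Y' 0 ω)^2) μ := (hY'2 0).integrable_sq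
  have hXYint : Integrable (fun ω => X' 0 ω * Y' 0 ω) μ :=
    (hXYindep 0).integrable_mul ((hX'2 0).integrable (by norm_num))
      ((hY'2 0).integrable (by norm_num))
  have hEW : ∫ ω, W 0 ω ∂μ
      = z^2 * (σ^2 + m^2) + 2 * z * (1 - z) * (m * m) + (1 - z)^2 * (σ^2 + m^2) := by
    have expand : ∀ ω, W 0 ω = z^2 * (X' 0 ω)^2 + 2 * z * (1 - z) * (X' 0 ω * Y' 0 ω)
        + (1 - z)^2 * (Y' 0 ω)^2 := by intro ω; simp only [hW]; ring
    rw [integral_congr_ae (Filter.Eventually.of_forall expand)]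
    have I1 : Integrable (fun ω => z ^ 2 * (X' 0 ω)^2
        + 2 * z * (1 - z) * (X' 0 ω * Y' 0 ω)) μ :=
      (hX2int.const_mul _).add (hXYint.const_mul _)
    have I2 : Integrable (fun ω => (1 - z) ^ 2 * (Y' 0 ω)^2) μ := hY2int.const_mul _
    rw [integral_add I1 I2,
        integral_add (hX2int.const_mul _) (hXYint.const_mul _),
        integral_const_mul, integral_const_mul, integral_const_mul, hEX2, hEY2, hEXY]
  -- strong law applications
  have hWlln := strong_law_ae_real W hWint hWindep hWident
  have hVlln := strong_law_ae_real V hVint hVindep hVident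
  have hae : ∀ᵐ ω ∂μ, ∀ i, X i ω = X' i ω ∧ Y i ω = Y' i ω := by
    rw [ae_all_iff]
    intro i
    filter_upwards [hXeq i, hYeq i] with ω h1 h2 using ⟨h1, h2⟩
  filter_upwards [hWlln, hVlln, hae] with ω hWω hVω haeω
  have hratio : Tendsto (fun n : ℕ => ((n : ℝ) - 1) / n) atTop (nhds 1) := by
    have : Tendsto (fun n : ℕ => 1 - (n : ℝ)⁻¹) atTop (nhds (1 - 0)) :=
      tendsto_const_nhds.sub tendsto_inv_atTop_nhds_zero_nat
    rw [sub_zero] at this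
    apply this.congr'
    filter_upwards [eventually_ge_atTop 1] with n hn
    have hn' : (n : ℝ) ≠ 0 := by positivity
    field_simp
  have key : Tendsto (fun n : ℕ =>
      (((n : ℝ) - 1) / n) * Real.log z
        - (1/2) * ((∑ i ∈ Finset.range n, W i ω) / n)
        + (1/2) * ((∑ i ∈ Finset.range n, V i ω) / n)) atTop
      (nhds (1 * Real.log z - (1/2) * (∫ ω, W 0 ω ∂μ) + (1/2) * (∫ ω, V 0 ω ∂μ))) :=
    ((hratio.mul_const _).sub (hWω.const_mul _)).add (hVω.const_mul _)
  have hlim : 1 * Real.log z - (1/2) * (∫ ω, W 0 ω ∂μ) + (1/2) * (∫ ω, V 0 ω ∂μ)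
      = Real.log z - σ^2 * z * (z - 1) := by
    rw [hEW]
    have : ∫ ω', V 0 ω' ∂μ = σ^2 + m^2 := hEX2
    rw [this]; ring
  rw [hlim] at key
  apply key.congr
  intro n
  have hsumW : ∑ i ∈ Finset.range n, (z * X i ω + (1 - z) * Y i ω)^2
      = ∑ i ∈ Finset.range n, W i ω := by
    apply Finset.sum_congr rfl
    intro i _
    rw [(haeω i).1, (haeω i).2]
  have hsumV : ∑ i ∈ Finset.range n, (X i ω)^2 = ∑ i ∈ Finset.range n, V i ω := by
    apply Finset.sum_congr rfl
    intro i _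
    rw [(haeω i).1]
  rw [hsumW, hsumV]
  ring
end

section
/- Let π be a positive probability density on ℝⁿ, A an invertible n×n real matrix, and b ∈ ℝⁿ. Let π'(q) = π(A^{-1}(q−b))/|det A|. Given points x, y ∈ ℝⁿ, z > 0, set x̃ = z x + (1−z) y, q = A x + b, u = A y + b, q̃ = z q + (1−z) u. Then q̃ = A x̃ + b and z^{n−1} π'(q̃)/π'(q) = z^{n−1} π(x̃)/π(x); i.e., the stretch-move proposal and acceptance probability are invariant under the affine transformation. -/
open Matrix

/-- Affine invariance of the stretch move: with `π'(q) = π(A⁻¹(q−b))/|det A|`,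
`x̃ = z x + (1−z) y`, `q = A x + b`, `u = A y + b`, `q̃ = z q + (1−z) u`, we have
`q̃ = A x̃ + b` and `z^{n−1} π'(q̃)/π'(q) = z^{n−1} π(x̃)/π(x)`. -/
theorem stretch_move_affine_invariance {n : ℕ}
    (π : (Fin n → ℝ) → ℝ) (hπ : ∀ x, 0 < π x)
    (A : Matrix (Fin n) (Fin n) ℝ) (hA : IsUnit A.det)
    (b : Fin n → ℝ) (z : ℝ) (hz : 0 < z)
    (π' : (Fin n → ℝ) → ℝ)
    (hπ' : π' = fun q => π (A⁻¹.mulVec (q - b)) / |A.det|)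
    (x y : Fin n → ℝ) :
    z • (A.mulVec x + b) + (1 - z) • (A.mulVec y + b)
        = A.mulVec (z • x + (1 - z) • y) + b ∧
    z ^ (n - 1) * π' (z • (A.mulVec x + b) + (1 - z) • (A.mulVec y + b))
        / π' (A.mulVec x + b)
      = z ^ (n - 1) * π (z • x + (1 - z) • y) / π x := by
  have key : ∀ v : Fin n → ℝ, π' (A.mulVec v + b) = π v / |A.det| := by
    intro v
    have h1 : A.mulVec v + b - b = A.mulVec v := by abel
    simp only [hπ', h1, Matrix.mulVec_mulVec, Matrix.nonsing_inv_mul A hA,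
      Matrix.one_mulVec]
  have heq : z • (A.mulVec x + b) + (1 - z) • (A.mulVec y + b)
      = A.mulVec (z • x + (1 - z) • y) + b := by
    simp only [Matrix.mulVec_add, Matrix.mulVec_smul, smul_add]
    module
  refine ⟨heq, ?_⟩
  rw [heq, key, key]
  have hdet : |A.det| ≠ 0 := by
    simpa [abs_eq_zero] using hA.ne_zero
  field_simp
end
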